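/- arXiv:1901.07716 — 7 statements merged into one kernel-verified Lean document; each statement's English description precedes it below -/
import Mathlib

section
/- Let α, β, κ > 0. Then the matrix M := α (L ⊗ I_m) + κ β H^d ∈ ℝ^{mn×mn} is symmetric positive definite; in particular its smallest eigenvalue λ₁ is strictly positive. -/
open Matrix Kronecker

lemma quad_kron {n m : ℕ} (L : Matrix (Fin n) (Fin n) ℝ)
    (x : Fin n × Fin m → ℝ) :
    x ⬝ᵥ ((L ⊗ₖ (1 : Matrix (Fin m) (Fin m) ℝ)) *ᵥ x)
      = ∑ j : Fin m, (fun i => x (i, j)) ⬝ᵥ (L *ᵥ fun i => x (i, j)) := by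
  simp only [dotProduct, mulVec, kroneckerMap_apply, Matrix.one_apply]
  rw [Fintype.sum_prod_type, Finset.sum_comm]
  refine Finset.sum_congr rfl fun j _ => Finset.sum_congr rfl fun i _ => ?_
  rw [Fintype.sum_prod_type]
  congr 1
  refine Finset.sum_congr rfl fun i' _ => ?_
  rw [Finset.sum_eq_single j] <;> simp +contextual [eq_comm]

lemma quad_diag {n m : ℕ} (H : Fin n → Matrix (Fin m) (Fin m) ℝ)
    (x : Fin n × Fin m → ℝ) :
    x ⬝ᵥ ((Matrix.of fun p q : Fin n × Fin m =>
        if p.1 = q.1 then H p.1 p.2 q.2 else 0) *ᵥ x)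
      = ∑ i : Fin n, (fun j => x (i, j)) ⬝ᵥ (H i *ᵥ fun j => x (i, j)) := by
  simp only [dotProduct, mulVec, Matrix.of_apply]
  rw [Fintype.sum_prod_type]
  refine Finset.sum_congr rfl fun i _ => Finset.sum_congr rfl fun j _ => ?_
  congr 1
  rw [Fintype.sum_prod_type, Finset.sum_eq_single i] <;> simp +contextual [eq_comm]

lemma smulHermReal {k : Type*} [Fintype k] (r : ℝ) (A : Matrix k k ℝ)
    (h : A.IsHermitian) : (r • A).IsHermitian := by
  unfold Matrix.IsHermitian
  rw [Matrix.conjTranspose_smul, h.eq, star_trivial]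

/-- For α, β, κ > 0, the matrix M := α (L ⊗ I_m) + κβ H^d is
symmetric positive definite; in particular all its eigenvalues (hence the
smallest one λ₁) are strictly positive. -/
theorem stmt0 {n m : ℕ}
    (L : Matrix (Fin n) (Fin n) ℝ)
    (hLsym : L.PosSemidef)
    (hL1 : L *ᵥ (fun _ => (1 : ℝ)) = 0)
    (hLconn : ∀ x : Fin n → ℝ, L *ᵥ x = 0 → ∃ c : ℝ, x = fun _ => c)
    (H : Fin n → Matrix (Fin m) (Fin m) ℝ)
    (hH : ∀ i, (H i).PosSemidef)
    (hHsum : (∑ i, H i).PosDef)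
    (α β κ : ℝ) (hα : 0 < α) (hβ : 0 < β) (hκ : 0 < κ)
    (Hd : Matrix (Fin n × Fin m) (Fin n × Fin m) ℝ)
    (hHd : Hd = Matrix.of fun p q => if p.1 = q.1 then H p.1 p.2 q.2 else 0)
    (M : Matrix (Fin n × Fin m) (Fin n × Fin m) ℝ)
    (hM : M = α • (L ⊗ₖ (1 : Matrix (Fin m) (Fin m) ℝ)) + (κ * β) • Hd) :
    M.PosDef ∧ ∀ (hHerm : M.IsHermitian) (i : Fin n × Fin m), 0 < hHerm.eigenvalues i := by
  have hMpd : M.PosDef := by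
    refine Matrix.PosDef.of_dotProduct_mulVec_pos ?_ ?_
    · -- Hermitian
      subst hM hHd
      refine IsHermitian.add (smulHermReal _ _ ?_) (smulHermReal _ _ ?_)
      · have hLs : ∀ a b, L b a = L a b := fun a b => by
          simpa using hLsym.1.apply a b
        ext p q
        obtain ⟨a, j⟩ := p
        obtain ⟨b, j'⟩ := q
        simp only [conjTranspose_apply, star_trivial, kroneckerMap_apply,
          Matrix.one_apply, hLs a b]
        by_cases h : j = j' <;> simp [h, Ne.symm]
      · ext p q
        obtain ⟨a, j⟩ := p
        obtain ⟨b, j'⟩ := q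
        simp only [conjTranspose_apply, Matrix.of_apply, star_trivial]
        rcases eq_or_ne a b with h | h
        · subst h
          simp only [if_pos rfl]
          have := congrFun (congrFun (hH a).1 j) j'
          simpa [conjTranspose_apply] using this
        · simp [h, Ne.symm h]
    · intro x hx
      have hQ1 : ∀ j, 0 ≤ (fun i => x (i, j)) ⬝ᵥ (L *ᵥ fun i => x (i, j)) :=
        fun j => by simpa using hLsym.dotProduct_mulVec_nonneg (fun i => x (i, j))
      have hQ2 : ∀ i, 0 ≤ (fun j => x (i, j)) ⬝ᵥ (H i *ᵥ fun j => x (i, j)) :=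
        fun i => by simpa using (hH i).dotProduct_mulVec_nonneg (fun j => x (i, j))
      have hform : x ⬝ᵥ (M *ᵥ x) =
          α * ∑ j : Fin m, (fun i => x (i, j)) ⬝ᵥ (L *ᵥ fun i => x (i, j))
          + (κ * β) * ∑ i : Fin n, (fun j => x (i, j)) ⬝ᵥ (H i *ᵥ fun j => x (i, j)) := by
        rw [hM, hHd, add_mulVec, dotProduct_add, smul_mulVec, smul_mulVec,
          dotProduct_smul, dotProduct_smul, quad_kron, quad_diag]
        simp [smul_eq_mul]
      have hs1 : 0 ≤ ∑ j : Fin m, (fun i => x (i, j)) ⬝ᵥ (L *ᵥ fun i => x (i, j)) :=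
        Finset.sum_nonneg fun j _ => hQ1 j
      have hs2 : 0 ≤ ∑ i : Fin n, (fun j => x (i, j)) ⬝ᵥ (H i *ᵥ fun j => x (i, j)) :=
        Finset.sum_nonneg fun i _ => hQ2 i
      have hnonneg : 0 ≤ x ⬝ᵥ (M *ᵥ x) := by
        rw [hform]
        positivity
      rcases hnonneg.lt_or_eq with h | h
      · simpa using h
      exfalso
      -- quadratic form is zero; derive x = 0
      have h1 : ∑ j : Fin m, (fun i => x (i, j)) ⬝ᵥ (L *ᵥ fun i => x (i, j)) = 0 ∧
          ∑ i : Fin n, (fun j => x (i, j)) ⬝ᵥ (H i *ᵥ fun j => x (i, j)) = 0 := by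
        have ha1 : 0 ≤ α * ∑ j : Fin m, (fun i => x (i, j)) ⬝ᵥ (L *ᵥ fun i => x (i, j)) :=
          mul_nonneg hα.le hs1
        have ha2 : 0 ≤ (κ * β) * ∑ i : Fin n, (fun j => x (i, j)) ⬝ᵥ (H i *ᵥ fun j => x (i, j)) :=
          mul_nonneg (mul_pos hκ hβ).le hs2
        have hz : α * (∑ j : Fin m, (fun i => x (i, j)) ⬝ᵥ (L *ᵥ fun i => x (i, j))) = 0 ∧
            (κ * β) * (∑ i : Fin n, (fun j => x (i, j)) ⬝ᵥ (H i *ᵥ fun j => x (i, j))) = 0 := by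
          constructor <;> linarith [hform, h]
        constructor
        · rcases mul_eq_zero.mp hz.1 with h' | h'
          · exact absurd h' hα.ne'
          · exact h'
        · rcases mul_eq_zero.mp hz.2 with h' | h'
          · exact absurd h' (mul_pos hκ hβ).ne'
          · exact h'
      have hcol : ∀ j : Fin m, L *ᵥ (fun i => x (i, j)) = 0 := by
        intro j
        have := (Finset.sum_eq_zero_iff_of_nonneg (fun j _ => hQ1 j)).mp h1.1 j
          (Finset.mem_univ j)
        have := (hLsym.dotProduct_mulVec_zero_iff (fun i => x (i, j))).mp (by simpa using this)
        exact this
      -- so each column is constant: x (i, j) = c j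
      have hconst : ∃ c : Fin m → ℝ, ∀ i j, x (i, j) = c j := by
        choose c hc using fun j => hLconn _ (hcol j)
        exact ⟨c, fun i j => congrFun (hc j) i⟩
      obtain ⟨c, hc⟩ := hconst
      have hrow : ∀ i : Fin n, c ⬝ᵥ (H i *ᵥ c) = 0 := by
        intro i
        have := (Finset.sum_eq_zero_iff_of_nonneg (fun i _ => hQ2 i)).mp h1.2 i
          (Finset.mem_univ i)
        have hxi : (fun j => x (i, j)) = c := funext fun j => hc i j
        rw [hxi] at this
        exact this
      have hcz : c = 0 := by
        by_contra hcne
        have hpos := hHsum.dotProduct_mulVec_pos hcne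
        have hsum : (∑ i, H i) *ᵥ c = ∑ i, (H i *ᵥ c) := by
          ext j
          simp [mulVec, dotProduct, Matrix.sum_apply, Finset.sum_mul]
          rw [Finset.sum_comm]
        have : c ⬝ᵥ ((∑ i, H i) *ᵥ c) = 0 := by
          rw [hsum]
          have : c ⬝ᵥ (∑ i, (H i *ᵥ c)) = ∑ i, c ⬝ᵥ (H i *ᵥ c) := by
            simp [dotProduct, Finset.sum_apply, Finset.mul_sum]
            rw [Finset.sum_comm]
          rw [this]
          exact Finset.sum_eq_zero fun i _ => hrow i
        simp [this] at hpos
      apply hx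
      funext p
      have := hc p.1 p.2
      simp [hcz] at this
      simpa using this
  refine ⟨hMpd, fun hHerm i => ?_⟩
  exact hMpd.eigenvalues_pos i
end

section
/- If ζ ∈ ℝ^{mn} is a nonzero vector with ζ' (L ⊗ I_m) ζ = 0 and ζ' H^d ζ = 0, then ζ = 1_n ⊗ ζ₁ for some nonzero ζ₁ ∈ ℝ^m satisfying ζ₁' (Σ_{i=1}^n H_i) ζ₁ = 0; consequently no such nonzero ζ exists when Σ_{i=1}^n H_i is positive definite. -/
open Matrix Kronecker

lemma sum_swap3 {α β γ : Type*} [Fintype α] [Fintype β] [Fintype γ] (f : α → β → γ → ℝ) :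
    ∑ x, ∑ y, ∑ i, f x y i = ∑ i, ∑ x, ∑ y, f x y i :=
  calc ∑ x, ∑ y, ∑ i, f x y i
      = ∑ x, ∑ i, ∑ y, f x y i := Finset.sum_congr rfl fun _ _ => Finset.sum_comm
    _ = ∑ i, ∑ x, ∑ y, f x y i := Finset.sum_comm

lemma kron_psd {n m : ℕ} {L : Matrix (Fin n) (Fin n) ℝ} (hL : L.PosSemidef) :
    (L ⊗ₖ (1 : Matrix (Fin m) (Fin m) ℝ)).PosSemidef := by
  obtain ⟨B, rfl⟩ : ∃ B : Matrix (Fin n) (Fin n) ℝ, L = Bᴴ * B := by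
    open scoped MatrixOrder Matrix.Norms.L2Operator in
    exact CStarAlgebra.nonneg_iff_eq_star_mul_self.mp hL.nonneg
  have : (Bᴴ * B) ⊗ₖ (1 : Matrix (Fin m) (Fin m) ℝ) =
      (B ⊗ₖ (1 : Matrix (Fin m) (Fin m) ℝ))ᴴ * (B ⊗ₖ (1 : Matrix (Fin m) (Fin m) ℝ)) := by
    rw [conjTranspose_eq_transpose_of_trivial, conjTranspose_eq_transpose_of_trivial,
      ← Matrix.kroneckerMap_transpose, Matrix.transpose_one, ← Matrix.mul_kronecker_mul, one_mul]
  rw [this]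
  exact Matrix.posSemidef_conjTranspose_mul_self _

/-- If ζ ≠ 0 satisfies ζ'(L ⊗ I_m)ζ = 0 and ζ' H^d ζ = 0, then
ζ = 1_n ⊗ ζ₁ for some nonzero ζ₁ with ζ₁'(Σᵢ Hᵢ)ζ₁ = 0; consequently no such
nonzero ζ exists when Σᵢ Hᵢ is positive definite. -/
theorem stmt1 {n m : ℕ}
    (L : Matrix (Fin n) (Fin n) ℝ)
    (hLsym : L.PosSemidef)
    (hL1 : L *ᵥ (fun _ => (1 : ℝ)) = 0)
    (hLconn : ∀ x : Fin n → ℝ, L *ᵥ x = 0 → ∃ c : ℝ, x = fun _ => c)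
    (H : Fin n → Matrix (Fin m) (Fin m) ℝ)
    (hH : ∀ i, (H i).PosSemidef)
    (Hd : Matrix (Fin n × Fin m) (Fin n × Fin m) ℝ)
    (hHd : Hd = Matrix.of fun p q => if p.1 = q.1 then H p.1 p.2 q.2 else 0)
    (ζ : Fin n × Fin m → ℝ) (hζ : ζ ≠ 0)
    (hLζ : ζ ⬝ᵥ ((L ⊗ₖ (1 : Matrix (Fin m) (Fin m) ℝ)) *ᵥ ζ) = 0)
    (hHζ : ζ ⬝ᵥ (Hd *ᵥ ζ) = 0) :
    (∃ ζ₁ : Fin m → ℝ, ζ₁ ≠ 0 ∧ ζ = (fun p => ζ₁ p.2) ∧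
      ζ₁ ⬝ᵥ ((∑ i, H i) *ᵥ ζ₁) = 0) ∧
    ((∑ i, H i).PosDef → False) := by
  -- n is nonempty
  have hn : Nonempty (Fin n) := by
    by_contra h
    exact hζ (funext fun p => absurd ⟨p.1⟩ h)
  obtain ⟨i0⟩ := hn
  -- (L ⊗ I) ζ = 0
  have hkz : (L ⊗ₖ (1 : Matrix (Fin m) (Fin m) ℝ)) *ᵥ ζ = 0 := by
    have := (kron_psd (m := m) hLsym).dotProduct_mulVec_zero_iff ζ
    simp only [star_trivial] at this
    exact this.mp hLζ
  -- each column of ζ is constant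
  have hcol : ∀ j : Fin m, ∀ i : Fin n, ζ (i, j) = ζ (i0, j) := by
    intro j
    have hz : L *ᵥ (fun i => ζ (i, j)) = 0 := by
      funext i
      have := congrFun hkz (i, j)
      simp only [Matrix.mulVec, dotProduct, Fintype.sum_prod_type, kroneckerMap_apply,
        Matrix.one_apply, Pi.zero_apply, mul_ite, mul_one, mul_zero, ite_mul, zero_mul,
        Finset.sum_ite_eq', Finset.mem_univ, if_true] at this ⊢
      simpa using this
    obtain ⟨c, hc⟩ := hLconn _ hz
    intro i
    have h1 := congrFun hc i
    have h2 := congrFun hc i0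
    rw [h1, h2]
  set ζ₁ : Fin m → ℝ := fun j => ζ (i0, j) with hζ₁def
  have hfactor : ζ = fun p => ζ₁ p.2 := funext fun p => hcol p.2 p.1
  have hζ₁ : ζ₁ ≠ 0 := by
    intro h0
    apply hζ
    rw [hfactor, h0]
    rfl
  have hsum : ζ₁ ⬝ᵥ ((∑ i, H i) *ᵥ ζ₁) = 0 := by
    rw [← hHζ, hfactor, hHd]
    simp only [Matrix.mulVec, dotProduct, Fintype.sum_prod_type, Matrix.of_apply,
      Matrix.sum_apply, ite_mul, zero_mul, mul_ite, mul_zero, Finset.sum_ite_irrel,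
      Finset.sum_const_zero, Finset.sum_ite_eq, Finset.sum_ite_eq', Finset.mem_univ,
      if_true, Finset.sum_mul, Finset.mul_sum]
    exact sum_swap3 fun x y i => ζ₁ x * (H i x y * ζ₁ y)
  refine ⟨⟨ζ₁, hζ₁, hfactor, hsum⟩, fun hPD => ?_⟩
  have := hPD.dotProduct_mulVec_pos hζ₁
  simp only [star_trivial] at this
  rw [hsum] at this
  exact lt_irrefl 0 this
end

section
/- Let α, β, κ > 0, b = (b_1',…,b_n')' ∈ ℝ^{mn}, and z* = (Σ_{i=1}^n H_i)^{-1}(Σ_{i=1}^n b_i). Suppose (z̃_eq, v_eq) ∈ ℝ^{mn} × ℝ^{mn} satisfies the equilibrium equations −κβ (H^d (z̃_eq + 1_n ⊗ z*) − b) = α (L ⊗ I_m) v_eq and (L ⊗ I_m) z̃_eq = 0. Then z̃_eq = 0. -/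
open Matrix Kronecker

/-- If (z̃_eq, v_eq) satisfies the equilibrium equations
−κβ (H^d (z̃_eq + 1_n ⊗ z*) − b) = α (L ⊗ I_m) v_eq and (L ⊗ I_m) z̃_eq = 0,
where z* = (Σᵢ Hᵢ)⁻¹(Σᵢ bᵢ), then z̃_eq = 0. -/
theorem stmt7 {n m : ℕ}
    (L : Matrix (Fin n) (Fin n) ℝ)
    (hLsym : L.PosSemidef)
    (hL1 : L *ᵥ (fun _ => (1 : ℝ)) = 0)
    (hLconn : ∀ x : Fin n → ℝ, L *ᵥ x = 0 → ∃ c : ℝ, x = fun _ => c)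
    (H : Fin n → Matrix (Fin m) (Fin m) ℝ)
    (hH : ∀ i, (H i).PosSemidef)
    (hHsum : (∑ i, H i).PosDef)
    (α β κ : ℝ) (hα : 0 < α) (hβ : 0 < β) (hκ : 0 < κ)
    (Hd : Matrix (Fin n × Fin m) (Fin n × Fin m) ℝ)
    (hHd : Hd = Matrix.of fun p q => if p.1 = q.1 then H p.1 p.2 q.2 else 0)
    (bvec : Fin n → Fin m → ℝ)
    (b : Fin n × Fin m → ℝ) (hb : b = fun p => bvec p.1 p.2)
    (zstar : Fin m → ℝ) (hzstar : zstar = (∑ i, H i)⁻¹ *ᵥ (∑ i, bvec i))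
    (zeq veq : Fin n × Fin m → ℝ)
    (heq1 : -((κ * β) • (Hd *ᵥ (zeq + fun p => zstar p.2) - b)) =
      α • ((L ⊗ₖ (1 : Matrix (Fin m) (Fin m) ℝ)) *ᵥ veq))
    (heq2 : (L ⊗ₖ (1 : Matrix (Fin m) (Fin m) ℝ)) *ᵥ zeq = 0) :
    zeq = 0 := by
  have hkron : ∀ (M : Matrix (Fin n) (Fin n) ℝ) (v : Fin n × Fin m → ℝ) (i : Fin n) (k : Fin m),
      ((M ⊗ₖ (1 : Matrix (Fin m) (Fin m) ℝ)) *ᵥ v) (i,k) = ∑ j, M i j * v (j,k) := by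
    intro M v i k
    simp [Matrix.mulVec, dotProduct, Fintype.sum_prod_type, Matrix.one_apply, mul_ite,
      Finset.sum_ite_eq, Finset.sum_ite_eq']
  -- columns of zeq are constant
  have hzk : ∀ k : Fin m, ∃ c : ℝ, (fun j => zeq (j,k)) = fun _ => c := by
    intro k
    apply hLconn
    funext i
    have := congrFun heq2 (i,k)
    rw [hkron] at this
    simpa [Matrix.mulVec, dotProduct] using this
  choose c hc using hzk
  have hzc : ∀ i k, zeq (i,k) = c k := fun i k => congrFun (hc k) i
  -- column sums of L are zero
  have hcolsum : ∀ j, ∑ i, L i j = 0 := by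
    intro j
    have h1 := congrFun hL1 j
    simp only [Matrix.mulVec, dotProduct, mul_one, Pi.zero_apply] at h1
    have hsymL : ∀ i, L i j = L j i := by
      intro i
      conv_lhs => rw [← hLsym.1]
      simp [Matrix.conjTranspose_apply]
    rw [Finset.sum_congr rfl (fun i _ => hsymL i)]
    exact h1
  -- sum heq1 over i at each k
  have hkey : ∀ k, ((∑ i, H i) *ᵥ (c + zstar)) k = (∑ i, bvec i) k := by
    intro k
    have hsum : (∑ i, (-((κ * β) • (Hd *ᵥ (zeq + fun p => zstar p.2) - b))) (i,k))
        = ∑ i, (α • ((L ⊗ₖ (1 : Matrix (Fin m) (Fin m) ℝ)) *ᵥ veq)) (i,k) := by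
      exact Finset.sum_congr rfl (fun i _ => congrFun heq1 (i,k))
    have hRHS : (∑ i, (α • ((L ⊗ₖ (1 : Matrix (Fin m) (Fin m) ℝ)) *ᵥ veq)) (i,k)) = 0 := by
      simp only [Pi.smul_apply, smul_eq_mul, hkron]
      rw [← Finset.mul_sum, Finset.sum_comm]
      simp [← Finset.sum_mul, hcolsum]
    rw [hRHS] at hsum
    have hHdv : ∀ i, (Hd *ᵥ (zeq + fun p => zstar p.2)) (i,k)
        = ∑ l, H i k l * (c l + zstar l) := by
      intro i
      subst hHd
      simp only [Matrix.mulVec, dotProduct, Fintype.sum_prod_type, Matrix.of_apply,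
        Pi.add_apply]
      rw [Finset.sum_eq_single i]
      · exact Finset.sum_congr rfl (fun l _ => by simp [hzc])
      · intro j _ hji
        simp [Ne.symm hji]
      · simp
    have hLHS : (∑ i, (-((κ * β) • (Hd *ᵥ (zeq + fun p => zstar p.2) - b))) (i,k))
        = -((κ * β) * ((∑ i, ∑ l, H i k l * (c l + zstar l)) - ∑ i, bvec i k)) := by
      simp only [Pi.neg_apply, Pi.smul_apply, Pi.sub_apply, smul_eq_mul, hHdv, hb]
      rw [Finset.sum_neg_distrib, ← Finset.mul_sum, Finset.sum_sub_distrib]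
    rw [hLHS] at hsum
    have hκβ : (κ * β) ≠ 0 := by positivity
    have h2 : (∑ i, ∑ l, H i k l * (c l + zstar l)) = ∑ i, bvec i k := by
      have h3 := neg_eq_zero.mp hsum
      have h4 := (mul_eq_zero.mp h3).resolve_left hκβ
      linarith [h4]
    simpa [Matrix.mulVec, dotProduct, Matrix.sum_apply, Finset.sum_comm (γ := Fin n),
      Finset.sum_mul, Finset.sum_apply] using h2
  have hkey' : (∑ i, H i) *ᵥ (c + zstar) = ∑ i, bvec i := funext hkey
  -- (∑ H) zstar = ∑ bvec
  have hdet : IsUnit (∑ i, H i).det := isUnit_iff_ne_zero.mpr (ne_of_gt hHsum.det_pos)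
  have hzs : (∑ i, H i) *ᵥ zstar = ∑ i, bvec i := by
    rw [hzstar, Matrix.mulVec_mulVec, Matrix.mul_nonsing_inv _ hdet, Matrix.one_mulVec]
  have hc0 : (∑ i, H i) *ᵥ c = 0 := by
    have : (∑ i, H i) *ᵥ c + (∑ i, H i) *ᵥ zstar = ∑ i, bvec i := by
      rw [← Matrix.mulVec_add]; exact hkey'
    rw [hzs] at this
    exact add_eq_right.mp this
  have hcz : c = 0 := by
    by_contra hcne
    have hpos := hHsum.dotProduct_mulVec_pos hcne
    rw [hc0] at hpos
    simp at hpos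
  funext p
  have := hzc p.1 p.2
  simp [hcz] at this
  simpa using this
end

section
/- Let α, β, κ > 0, b ∈ ℝ^{mn}, z* ∈ ℝ^m, and let v_eq ∈ ℝ^{mn} satisfy −κβ (H^d (1_n ⊗ z*) − b) = α (L ⊗ I_m) v_eq. Suppose z̃, v : ℝ → ℝ^{mn} are differentiable and solve the averaged closed-loop system z̃'(t) = −α (L ⊗ I_m)(z̃(t) + v(t)) − κβ (H^d (z̃(t) + 1_n ⊗ z*) − b) and v'(t) = (L ⊗ I_m) z̃(t). Then the function V(t) = (1/2)(‖z̃(t)‖² + α‖v(t) − v_eq‖²) is differentiable with V'(t) = −z̃(t)' M z̃(t) for all t, where M = α (L ⊗ I_m) + κβ H^d. -/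
open Matrix Kronecker

lemma hasDerivAt_dot {k : Type*} [Fintype k] {f g : ℝ → k → ℝ} {f' g' : k → ℝ} {t : ℝ}
    (hf : HasDerivAt f f' t) (hg : HasDerivAt g g' t) :
    HasDerivAt (fun t => f t ⬝ᵥ g t) (f' ⬝ᵥ g t + f t ⬝ᵥ g') t := by
  have h : ∀ x, f x ⬝ᵥ g x = ∑ i, f x i * g x i := fun x => rfl
  simp only [h]
  have : (f' ⬝ᵥ g t + f t ⬝ᵥ g') = ∑ i, (f' i * g t i + f t i * g' i) := by
    simp [dotProduct, Finset.sum_add_distrib]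
  rw [this]
  exact HasDerivAt.fun_sum fun i _ =>
    ((hasDerivAt_pi.mp hf i).mul (hasDerivAt_pi.mp hg i))

lemma symm_dot {k : Type*} [Fintype k] {A : Matrix k k ℝ} (h : Aᵀ = A) (x y : k → ℝ) :
    (A *ᵥ x) ⬝ᵥ y = x ⬝ᵥ (A *ᵥ y) := by
  rw [Matrix.dotProduct_mulVec, ← Matrix.vecMul_transpose, h]

/-- Along solutions of the averaged closed-loop system
z̃' = −α(L⊗I_m)(z̃+v) − κβ(H^d(z̃ + 1_n⊗z*) − b), v' = (L⊗I_m)z̃, with v_eq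
satisfying −κβ(H^d(1_n⊗z*) − b) = α(L⊗I_m)v_eq, the Lyapunov function
V(t) = (1/2)(‖z̃(t)‖² + α‖v(t)−v_eq‖²) (squared Euclidean norms written as dot
products) satisfies V'(t) = −z̃(t)' M z̃(t) with M = α(L⊗I_m) + κβ H^d. -/
theorem stmt8 {n m : ℕ}
    (L : Matrix (Fin n) (Fin n) ℝ)
    (hLsym : L.PosSemidef)
    (hL1 : L *ᵥ (fun _ => (1 : ℝ)) = 0)
    (hLconn : ∀ x : Fin n → ℝ, L *ᵥ x = 0 → ∃ c : ℝ, x = fun _ => c)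
    (H : Fin n → Matrix (Fin m) (Fin m) ℝ)
    (hH : ∀ i, (H i).PosSemidef)
    (α β κ : ℝ) (hα : 0 < α) (hβ : 0 < β) (hκ : 0 < κ)
    (Hd : Matrix (Fin n × Fin m) (Fin n × Fin m) ℝ)
    (hHd : Hd = Matrix.of fun p q => if p.1 = q.1 then H p.1 p.2 q.2 else 0)
    (Lm : Matrix (Fin n × Fin m) (Fin n × Fin m) ℝ)
    (hLm : Lm = L ⊗ₖ (1 : Matrix (Fin m) (Fin m) ℝ))
    (b : Fin n × Fin m → ℝ) (zstar : Fin m → ℝ)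
    (veq : Fin n × Fin m → ℝ)
    (hveq : -((κ * β) • (Hd *ᵥ (fun p => zstar p.2) - b)) = α • (Lm *ᵥ veq))
    (ztil v : ℝ → Fin n × Fin m → ℝ)
    (hz : ∀ t, HasDerivAt ztil
      (-(α • (Lm *ᵥ (ztil t + v t))) -
        (κ * β) • (Hd *ᵥ (ztil t + fun p => zstar p.2) - b)) t)
    (hv : ∀ t, HasDerivAt v (Lm *ᵥ ztil t) t)
    (V : ℝ → ℝ)
    (hV : ∀ t, V t = (1 / 2) *
      (ztil t ⬝ᵥ ztil t + α * ((v t - veq) ⬝ᵥ (v t - veq))))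
    (M : Matrix (Fin n × Fin m) (Fin n × Fin m) ℝ)
    (hM : M = α • Lm + (κ * β) • Hd) :
    ∀ t, HasDerivAt V (-(ztil t ⬝ᵥ (M *ᵥ ztil t))) t := by
  -- symmetry facts
  have hLt : Lᵀ = L := by
    have := hLsym.1
    rwa [Matrix.IsHermitian, Matrix.conjTranspose_eq_transpose_of_trivial] at this
  have hLmSym : Lmᵀ = Lm := by
    rw [hLm, ← Matrix.kroneckerMap_transpose, hLt, Matrix.transpose_one]
  have hHdSym : Hdᵀ = Hd := by
    subst hHd
    ext ⟨i, p⟩ ⟨j, q⟩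
    simp only [Matrix.transpose_apply, Matrix.of_apply]
    by_cases hij : i = j
    · subst hij
      simp only [if_pos rfl]
      have := (hH i).1
      rw [Matrix.IsHermitian, Matrix.conjTranspose_eq_transpose_of_trivial] at this
      calc H i q p = (H i)ᵀ p q := rfl
        _ = H i p q := by rw [this]
    · simp [hij, Ne.symm hij]
  intro t
  set z := ztil t with hzdef
  set w := v t with hwdef
  set z' : Fin n × Fin m → ℝ :=
    -(α • (Lm *ᵥ (ztil t + v t))) - (κ * β) • (Hd *ᵥ (ztil t + fun p => zstar p.2) - b)
      with hz'def
  -- derivative of the first dot product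
  have h1 : HasDerivAt (fun t => ztil t ⬝ᵥ ztil t) (z' ⬝ᵥ z + z ⬝ᵥ z') t :=
    hasDerivAt_dot (hz t) (hz t)
  -- derivative of the second dot product
  have hvsub : HasDerivAt (fun t => v t - veq) (Lm *ᵥ z) t := (hv t).sub_const veq
  have h2 : HasDerivAt (fun t => (v t - veq) ⬝ᵥ (v t - veq))
      ((Lm *ᵥ z) ⬝ᵥ (w - veq) + (w - veq) ⬝ᵥ (Lm *ᵥ z)) t :=
    hasDerivAt_dot hvsub hvsub
  have hVfun : V = fun t => (1 / 2) *
      (ztil t ⬝ᵥ ztil t + α * ((v t - veq) ⬝ᵥ (v t - veq))) := funext hV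
  have hD : HasDerivAt V ((1 / 2) * ((z' ⬝ᵥ z + z ⬝ᵥ z') +
      α * ((Lm *ᵥ z) ⬝ᵥ (w - veq) + (w - veq) ⬝ᵥ (Lm *ᵥ z)))) t := by
    rw [hVfun]
    exact ((h1.add (h2.const_mul α)).const_mul (1 / 2))
  convert hD using 1
  -- algebra
  have hz'eq : z' = -(α • (Lm *ᵥ z)) - α • (Lm *ᵥ w) - (κ * β) • (Hd *ᵥ z)
      + α • (Lm *ᵥ veq) := by
    rw [hz'def, ← hveq, ← hzdef, ← hwdef]
    have e1 : Lm *ᵥ (z + w) = Lm *ᵥ z + Lm *ᵥ w := Matrix.mulVec_add _ _ _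
    have e2 : Hd *ᵥ (z + fun p => zstar p.2) - b
        = Hd *ᵥ z + (Hd *ᵥ (fun p => zstar p.2) - b) := by
      rw [Matrix.mulVec_add]; abel
    rw [e1, e2]
    simp only [smul_add]
    abel
  have hcomm : ∀ x y : Fin n × Fin m → ℝ, x ⬝ᵥ y = y ⬝ᵥ x := fun x y =>
    dotProduct_comm x y
  have key : z' ⬝ᵥ z + α * ((w - veq) ⬝ᵥ (Lm *ᵥ z)) = -(z ⬝ᵥ (M *ᵥ z)) := by
    rw [hz'eq]
    have hMz : M *ᵥ z = α • (Lm *ᵥ z) + (κ * β) • (Hd *ᵥ z) := by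
      rw [hM, Matrix.add_mulVec, Matrix.smul_mulVec, Matrix.smul_mulVec]
    rw [hMz]
    simp only [sub_dotProduct, add_dotProduct, neg_dotProduct,
      smul_dotProduct, dotProduct_add, dotProduct_smul,
      dotProduct_sub, smul_eq_mul]
    have s1 : (Lm *ᵥ w) ⬝ᵥ z = w ⬝ᵥ (Lm *ᵥ z) := symm_dot hLmSym w z
    have s2 : (Lm *ᵥ veq) ⬝ᵥ z = veq ⬝ᵥ (Lm *ᵥ z) := symm_dot hLmSym veq z
    have s3 : (Lm *ᵥ z) ⬝ᵥ z = z ⬝ᵥ (Lm *ᵥ z) := symm_dot hLmSym z z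
    have s4 : (Hd *ᵥ z) ⬝ᵥ z = z ⬝ᵥ (Hd *ᵥ z) := symm_dot hHdSym z z
    rw [s1, s2, s3, s4]
    ring
  have hms : (Lm *ᵥ z) ⬝ᵥ (w - veq) = (w - veq) ⬝ᵥ (Lm *ᵥ z) := hcomm _ _
  have hzz : z ⬝ᵥ z' = z' ⬝ᵥ z := hcomm _ _
  rw [hms, hzz, ← key]
  ring
end

section
/- Let α, β, κ, ϱ > 0 and set φ = ϱ + (1+α)/(αϱ). Let ξ ∈ ℝ^{1×n} be a left eigenvector of L associated with the zero eigenvalue having all entries strictly positive, Ξ = diag(ξ), b ∈ ℝ^{mn}, z* ∈ ℝ^m, and let (0, v_eq) be an equilibrium of the directed averaged system, i.e., −κβ (Ξ^{-1} ⊗ I_m)(H^d (1_n ⊗ z*) − b) = α (L ⊗ I_m) v_eq. Suppose z̃, v : ℝ → ℝ^{mn} are differentiable and solve z̃'(t) = −α (L ⊗ I_m)(φ z̃(t) + v(t)) − κβ (Ξ^{-1} ⊗ I_m)(H^d (z̃(t) + 1_n ⊗ z*) − b), v'(t) = (L ⊗ I_m) z̃(t). Then V(t) = (1/2) x(t)'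 ([[ϱ²+1, ϱ],[ϱ, 1]] ⊗ (Ξ ⊗ I_m)) x(t), with x(t) = [z̃(t); v(t) − v_eq], satisfies V'(t) = −x(t)' (P ⊗ (ΞL + L'Ξ) ⊗ I_m + Q ⊗ H^d) x(t), where P = (α/2)[[ϱ³+2ϱ+(α+1)/(αϱ), 1+ϱ²],[1+ϱ², ϱ]] and Q = κβ [[1+ϱ², ϱ/2],[ϱ/2, 0]]. -/
open Matrix Kronecker

lemma quadDeriv {ι : Type*} [Fintype ι] (K : Matrix ι ι ℝ) (f : ℝ → ι → ℝ)
    (f' : ι → ℝ) (t : ℝ) (hf : ∀ i, HasDerivAt (fun s => f s i) (f' i) t) :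
    HasDerivAt (fun s => f s ⬝ᵥ (K *ᵥ f s))
      (f' ⬝ᵥ (K *ᵥ f t) + f t ⬝ᵥ (K *ᵥ f')) t := by
  simp only [dotProduct, Matrix.mulVec]
  have h := HasDerivAt.fun_sum (u := Finset.univ) (A := fun i s => f s i * ∑ j, K i j * f s j)
    (A' := fun i => f' i * (∑ j, K i j * f t j) + f t i * ∑ j, K i j * f' j)
    (fun i _ => ((hf i).mul (HasDerivAt.fun_sum (fun j _ => (hf j).const_mul (K i j)))))
  refine HasDerivAt.congr_deriv h (Eq.symm ?_)
  rw [Finset.sum_add_distrib]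

lemma blockDot {ι : Type*} [Fintype ι] (K2 : Matrix (Fin 2) (Fin 2) ℝ)
    (B : Matrix ι ι ℝ) (u w : Fin 2 × ι → ℝ) :
    u ⬝ᵥ ((K2 ⊗ₖ B) *ᵥ w) =
      ∑ i, ∑ j, K2 i j * ((fun p => u (i, p)) ⬝ᵥ (B *ᵥ fun p => w (j, p))) := by
  simp only [dotProduct, Matrix.mulVec, kroneckerMap_apply,
    Fintype.sum_prod_type, Finset.mul_sum]
  refine Finset.sum_congr rfl fun i _ => ?_
  rw [Finset.sum_comm]
  refine Finset.sum_congr rfl fun j _ => Finset.sum_congr rfl fun p _ =>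
    Finset.sum_congr rfl fun q _ => ?_
  ring

lemma dotT {ι : Type*} [Fintype ι] (A : Matrix ι ι ℝ) (u w : ι → ℝ) :
    u ⬝ᵥ (Aᵀ *ᵥ w) = w ⬝ᵥ (A *ᵥ u) := by
  rw [Matrix.dotProduct_mulVec, Matrix.vecMul_transpose, dotProduct_comm]

/-- For the directed averaged system with φ = ϱ + (1+α)/(αϱ) and
equilibrium (0, v_eq), the Lyapunov function V(t) = (1/2) x(t)' K x(t) with
K = [[ϱ²+1, ϱ],[ϱ, 1]] ⊗ (Ξ ⊗ I_m) and x(t) = [z̃(t); v(t) − v_eq] satisfies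
V'(t) = −x(t)' (P ⊗ (ΞL + L'Ξ) ⊗ I_m + Q ⊗ H^d) x(t), where
P = (α/2)[[ϱ³+2ϱ+(α+1)/(αϱ), 1+ϱ²],[1+ϱ², ϱ]] and Q = κβ[[1+ϱ², ϱ/2],[ϱ/2, 0]]. -/
theorem stmt12 {n m : ℕ}
    (L : Matrix (Fin n) (Fin n) ℝ)
    (hL1 : L *ᵥ (fun _ => (1 : ℝ)) = 0)
    (hLconn : ∀ x : Fin n → ℝ, L *ᵥ x = 0 → ∃ c : ℝ, x = fun _ => c)
    (ξ : Fin n → ℝ) (hξL : ξ ᵥ* L = 0) (hξpos : ∀ i, 0 < ξ i)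
    (H : Fin n → Matrix (Fin m) (Fin m) ℝ)
    (hH : ∀ i, (H i).PosSemidef)
    (α β κ ϱ φ : ℝ) (hα : 0 < α) (hβ : 0 < β) (hκ : 0 < κ) (hϱ : 0 < ϱ)
    (hφ : φ = ϱ + (1 + α) / (α * ϱ))
    (Hd : Matrix (Fin n × Fin m) (Fin n × Fin m) ℝ)
    (hHd : Hd = Matrix.of fun p q => if p.1 = q.1 then H p.1 p.2 q.2 else 0)
    (Lm : Matrix (Fin n × Fin m) (Fin n × Fin m) ℝ)
    (hLm : Lm = L ⊗ₖ (1 : Matrix (Fin m) (Fin m) ℝ))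
    (Xim : Matrix (Fin n × Fin m) (Fin n × Fin m) ℝ)
    (hXim : Xim = (Matrix.diagonal ξ)⁻¹ ⊗ₖ (1 : Matrix (Fin m) (Fin m) ℝ))
    (b : Fin n × Fin m → ℝ) (zstar : Fin m → ℝ)
    (veq : Fin n × Fin m → ℝ)
    (hveq : -((κ * β) • (Xim *ᵥ (Hd *ᵥ (fun p => zstar p.2) - b))) = α • (Lm *ᵥ veq))
    (ztil v : ℝ → Fin n × Fin m → ℝ)
    (hz : ∀ t, HasDerivAt ztil
      (-(α • (Lm *ᵥ (φ • ztil t + v t))) -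
        (κ * β) • (Xim *ᵥ (Hd *ᵥ (ztil t + fun p => zstar p.2) - b))) t)
    (hv : ∀ t, HasDerivAt v (Lm *ᵥ ztil t) t)
    (x : ℝ → Fin 2 × (Fin n × Fin m) → ℝ)
    (hx : ∀ t, x t = fun q => ![ztil t q.2, v t q.2 - veq q.2] q.1)
    (K : Matrix (Fin 2 × (Fin n × Fin m)) (Fin 2 × (Fin n × Fin m)) ℝ)
    (hK : K = (!![ϱ ^ 2 + 1, ϱ; ϱ, 1] : Matrix (Fin 2) (Fin 2) ℝ) ⊗ₖ
      ((Matrix.diagonal ξ) ⊗ₖ (1 : Matrix (Fin m) (Fin m) ℝ)))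
    (V : ℝ → ℝ) (hV : ∀ t, V t = (1 / 2) * (x t ⬝ᵥ (K *ᵥ x t)))
    (P Q : Matrix (Fin 2) (Fin 2) ℝ)
    (hP : P = (α / 2) • !![ϱ ^ 3 + 2 * ϱ + (α + 1) / (α * ϱ), 1 + ϱ ^ 2; 1 + ϱ ^ 2, ϱ])
    (hQ : Q = (κ * β) • !![1 + ϱ ^ 2, ϱ / 2; ϱ / 2, 0])
    (S : Matrix (Fin 2 × (Fin n × Fin m)) (Fin 2 × (Fin n × Fin m)) ℝ)
    (hS : S = P ⊗ₖ (((Matrix.diagonal ξ) * L + Lᵀ * (Matrix.diagonal ξ)) ⊗ₖ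
      (1 : Matrix (Fin m) (Fin m) ℝ)) + Q ⊗ₖ Hd) :
    ∀ t, HasDerivAt V (-(x t ⬝ᵥ (S *ᵥ x t))) t := by
  have hVfun : V = fun t => (1/2) * (x t ⬝ᵥ (K *ᵥ x t)) := funext hV
  have hxfun : x = fun t q => ![ztil t q.2, v t q.2 - veq q.2] q.1 := funext hx
  subst hVfun hxfun
  intro t
  set zd : Fin n × Fin m → ℝ := -(α • (Lm *ᵥ (φ • ztil t + v t))) -
        (κ * β) • (Xim *ᵥ (Hd *ᵥ (ztil t + fun p => zstar p.2) - b)) with hzd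
  set d : Fin 2 × (Fin n × Fin m) → ℝ := fun q => ![zd q.2, (Lm *ᵥ ztil t) q.2] q.1 with hd
  have hcomp : ∀ i : Fin 2 × (Fin n × Fin m),
      HasDerivAt (fun s => ![ztil s i.2, v s i.2 - veq i.2] i.1) (d i) t := by
    rintro ⟨i, q⟩
    fin_cases i
    · simpa [hd, hzd] using (hasDerivAt_pi.mp (hz t) q)
    · simpa [hd] using ((hasDerivAt_pi.mp (hv t) q).sub_const (veq q))
  have hder := HasDerivAt.const_mul (1/2 : ℝ)
    (quadDeriv K (fun s q => ![ztil s q.2, v s q.2 - veq q.2] q.1) d t hcomp)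
  refine HasDerivAt.congr_deriv hder (Eq.symm ?_)
  -- now the algebraic identity
  set w : Fin n × Fin m → ℝ := fun p => v t p - veq p with hw
  -- simplify zd using the equilibrium condition
  have hveq' : (κ * β) • (Xim *ᵥ (Hd *ᵥ (fun p => zstar p.2) - b)) = -(α • (Lm *ᵥ veq)) := by
    rw [← hveq, neg_neg]
  have hvsplit : v t = w + veq := by funext p; simp [hw]
  have hzd2 : zd = (-(α*φ)) • (Lm *ᵥ ztil t) + (-α) • (Lm *ᵥ w)
      + (-(κ*β)) • (Xim *ᵥ (Hd *ᵥ ztil t)) := by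
    rw [hzd]
    conv_lhs => rw [hvsplit]
    simp only [Matrix.mulVec_add, Matrix.mulVec_smul, add_sub_assoc, smul_add, hveq']
    module
  -- symmetry facts
  have hKsym : Kᵀ = K := by
    have h2 : (!![ϱ ^ 2 + 1, ϱ; ϱ, 1] : Matrix (Fin 2) (Fin 2) ℝ)ᵀ = !![ϱ ^ 2 + 1, ϱ; ϱ, 1] := by
      ext i j; fin_cases i <;> fin_cases j <;> simp
    rw [hK, ← Matrix.kroneckerMap_transpose, ← Matrix.kroneckerMap_transpose,
      Matrix.diagonal_transpose, Matrix.transpose_one, h2]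
  have hHdsym : Hdᵀ = Hd := by
    rw [hHd]
    ext p q
    simp only [Matrix.transpose_apply, Matrix.of_apply]
    rcases eq_or_ne p.1 q.1 with h | h
    · rw [if_pos h.symm, if_pos h, ← h]
      simpa using ((hH p.1).1.apply q.2 p.2).symm
    · rw [if_neg (Ne.symm h), if_neg h]
  -- matrix product facts
  have hBLm : ((Matrix.diagonal ξ) ⊗ₖ (1 : Matrix (Fin m) (Fin m) ℝ)) * Lm
      = (Matrix.diagonal ξ * L) ⊗ₖ (1 : Matrix (Fin m) (Fin m) ℝ) := by
    rw [hLm, ← Matrix.mul_kronecker_mul, Matrix.one_mul]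
  have hBXim : ((Matrix.diagonal ξ) ⊗ₖ (1 : Matrix (Fin m) (Fin m) ℝ)) * Xim = 1 := by
    rw [hXim, ← Matrix.mul_kronecker_mul, Matrix.mul_nonsing_inv, Matrix.one_mul,
      Matrix.one_kronecker_one]
    rw [Matrix.det_diagonal]
    exact isUnit_iff_ne_zero.mpr (ne_of_gt (Finset.prod_pos fun i _ => hξpos i))
  have hM : ((Matrix.diagonal ξ * L + Lᵀ * Matrix.diagonal ξ) ⊗ₖ (1 : Matrix (Fin m) (Fin m) ℝ))
      = ((Matrix.diagonal ξ * L) ⊗ₖ (1 : Matrix (Fin m) (Fin m) ℝ))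
        + ((Matrix.diagonal ξ * L) ⊗ₖ (1 : Matrix (Fin m) (Fin m) ℝ))ᵀ := by
    rw [Matrix.add_kronecker, ← Matrix.kroneckerMap_transpose]
    simp [Matrix.transpose_mul, Matrix.diagonal_transpose, Matrix.transpose_one]
  -- symmetrize the K-side
  have hswap : d ⬝ᵥ (K *ᵥ (fun q => ![ztil t q.2, v t q.2 - veq q.2] q.1))
      = (fun q => ![ztil t q.2, v t q.2 - veq q.2] q.1) ⬝ᵥ (K *ᵥ d) := by
    conv_lhs => rw [← hKsym]
    rw [dotT]
  rw [hswap]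
  -- expand everything
  rw [hS, hM, hK, hP, hQ, Matrix.add_mulVec, dotProduct_add]
  rw [blockDot, blockDot, blockDot]
  have hHdswap : (ztil t) ⬝ᵥ (Hd *ᵥ w) = w ⬝ᵥ (Hd *ᵥ ztil t) := by
    conv_lhs => rw [← hHdsym]
    rw [dotT]
  have hzeta : (fun p => ztil t p) = ztil t := rfl
  have hweta : (fun p => v t p - veq p) = w := hw.symm
  simp only [Fin.sum_univ_two, Matrix.cons_val_zero, Matrix.cons_val_one, Matrix.head_cons,
    Matrix.smul_apply, Matrix.of_apply, Matrix.cons_val', Matrix.empty_val',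
    Matrix.cons_val_fin_one, smul_eq_mul, hd, hzd2, hzeta, hweta,
    Matrix.add_mulVec, Matrix.mulVec_add, Matrix.mulVec_smul, Matrix.mulVec_mulVec,
    ← Matrix.mul_assoc, hBLm, hBXim, Matrix.one_mul, Matrix.one_mulVec,
    dotProduct_add, dotProduct_smul, dotT, hHdswap]
  rw [hφ]
  field_simp
  ring
end

section
/- Let α, β, κ, ϱ > 0, let ξ ∈ ℝ^{1×n} satisfy ξ L = 0 with all entries strictly positive, Ξ = diag(ξ), and suppose L·1_n = 0 and Σ_{i=1}^n H_i is positive definite. Let P = (α/2)[[ϱ³+2ϱ+(α+1)/(αϱ), 1+ϱ²],[1+ϱ², ϱ]] and Q = κβ [[1+ϱ², ϱ/2],[ϱ/2, 0]]. Then for every x of the form x = [1_n ⊗ ζ; 0_{mn}] with ζ ∈ ℝ^m, one has x' (P ⊗ (ΞL + L'Ξ) ⊗ I_m + Q ⊗ H^d) x = κβ(1+ϱ²) ζ' (Σ_{i=1}^n H_i) ζ, and hence there exists c₀ > 0 (e.g., c₀ = κβ(1+ϱ²)λ_min(Σ_i H_i)/n) such that −x' (P ⊗ (ΞL + L'Ξ)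 ⊗ I_m + Q ⊗ H^d) x ≤ −c₀ ‖x‖² for all such x. -/
open Matrix Kronecker

lemma posdef_lower' {m : ℕ} {A : Matrix (Fin m) (Fin m) ℝ} (hA : A.PosDef) :
    ∃ c > (0:ℝ), ∀ ζ : Fin m → ℝ, c * (ζ ⬝ᵥ ζ) ≤ ζ ⬝ᵥ (A *ᵥ ζ) := by
  rcases Nat.eq_zero_or_pos m with hm | hm
  · subst hm
    exact ⟨1, one_pos, fun ζ => by simp [dotProduct]⟩
  · have hHerm := hA.isHermitian
    haveI : Nonempty (Fin m) := ⟨⟨0, hm⟩⟩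
    obtain ⟨i0, -, hi0⟩ := Finset.exists_min_image Finset.univ hHerm.eigenvalues
      ⟨⟨0, hm⟩, Finset.mem_univ _⟩
    refine ⟨hHerm.eigenvalues i0, hA.eigenvalues_pos i0, fun ζ => ?_⟩
    set U : Matrix (Fin m) (Fin m) ℝ := (hHerm.eigenvectorUnitary : Matrix (Fin m) (Fin m) ℝ) with hU
    have hstar : star U = Uᵀ := by
      ext i j; simp [Matrix.star_apply]
    have hUU : U * Uᵀ = 1 := by
      rw [← hstar]; exact (Matrix.mem_unitaryGroup_iff).mp hHerm.eigenvectorUnitary.2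
    set w : Fin m → ℝ := Uᵀ *ᵥ ζ with hw
    have hζζ : w ⬝ᵥ w = ζ ⬝ᵥ ζ := by
      calc w ⬝ᵥ w = w ⬝ᵥ (Uᵀ *ᵥ ζ) := rfl
        _ = (w ᵥ* Uᵀ) ⬝ᵥ ζ := dotProduct_mulVec _ _ _
        _ = (U *ᵥ w) ⬝ᵥ ζ := by rw [vecMul_transpose]
        _ = ((U * Uᵀ) *ᵥ ζ) ⬝ᵥ ζ := by rw [hw, mulVec_mulVec]
        _ = ζ ⬝ᵥ ζ := by rw [hUU, one_mulVec]
    have hform : ζ ⬝ᵥ (A *ᵥ ζ) = ∑ i, hHerm.eigenvalues i * (w i)^2 := by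
      conv_lhs => rw [hHerm.spectral_theorem]
      rw [Unitary.conjStarAlgAut_apply, ← hU, hstar, ← mulVec_mulVec, ← mulVec_mulVec, dotProduct_mulVec, ← mulVec_transpose, ← hw]
      simp [dotProduct, mulVec_diagonal, sq]
      exact Finset.sum_congr rfl fun i _ => by ring
    rw [hform, ← hζζ, dotProduct, Finset.mul_sum]
    refine Finset.sum_le_sum fun i _ => ?_
    have h1 : hHerm.eigenvalues i0 ≤ hHerm.eigenvalues i := hi0 i (Finset.mem_univ i)
    nlinarith [sq_nonneg (w i)]

/-- For every x = [1_n ⊗ ζ; 0], one has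
x'(P ⊗ (ΞL + L'Ξ) ⊗ I_m + Q ⊗ H^d)x = κβ(1+ϱ²) ζ'(Σᵢ Hᵢ)ζ, and hence (when
Σᵢ Hᵢ is positive definite) there exists c₀ > 0 with
−x'(P ⊗ (ΞL + L'Ξ) ⊗ I_m + Q ⊗ H^d)x ≤ −c₀‖x‖² for all such x. -/
theorem stmt13 {n m : ℕ} (hn : 0 < n)
    (L : Matrix (Fin n) (Fin n) ℝ)
    (hL1 : L *ᵥ (fun _ => (1 : ℝ)) = 0)
    (ξ : Fin n → ℝ) (hξL : ξ ᵥ* L = 0) (hξpos : ∀ i, 0 < ξ i)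
    (H : Fin n → Matrix (Fin m) (Fin m) ℝ)
    (hH : ∀ i, (H i).PosSemidef)
    (hHsum : (∑ i, H i).PosDef)
    (α β κ ϱ : ℝ) (hα : 0 < α) (hβ : 0 < β) (hκ : 0 < κ) (hϱ : 0 < ϱ)
    (Hd : Matrix (Fin n × Fin m) (Fin n × Fin m) ℝ)
    (hHd : Hd = Matrix.of fun p q => if p.1 = q.1 then H p.1 p.2 q.2 else 0)
    (P Q : Matrix (Fin 2) (Fin 2) ℝ)
    (hP : P = (α / 2) • !![ϱ ^ 3 + 2 * ϱ + (α + 1) / (α * ϱ), 1 + ϱ ^ 2; 1 + ϱ ^ 2, ϱ])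
    (hQ : Q = (κ * β) • !![1 + ϱ ^ 2, ϱ / 2; ϱ / 2, 0])
    (S : Matrix (Fin 2 × (Fin n × Fin m)) (Fin 2 × (Fin n × Fin m)) ℝ)
    (hS : S = P ⊗ₖ (((Matrix.diagonal ξ) * L + Lᵀ * (Matrix.diagonal ξ)) ⊗ₖ
      (1 : Matrix (Fin m) (Fin m) ℝ)) + Q ⊗ₖ Hd)
    (x : (Fin m → ℝ) → Fin 2 × (Fin n × Fin m) → ℝ)
    (hx : ∀ ζ : Fin m → ℝ, x ζ = fun q => ![(fun p : Fin n × Fin m => ζ p.2), 0] q.1 q.2) :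
    (∀ ζ : Fin m → ℝ, x ζ ⬝ᵥ (S *ᵥ x ζ) =
      κ * β * (1 + ϱ ^ 2) * (ζ ⬝ᵥ ((∑ i, H i) *ᵥ ζ))) ∧
    ∃ c₀ > (0 : ℝ), ∀ ζ : Fin m → ℝ,
      -(x ζ ⬝ᵥ (S *ᵥ x ζ)) ≤ -c₀ * (x ζ ⬝ᵥ x ζ) := by
  have hrow : ∀ i, ∑ k, ((Matrix.diagonal ξ * L) i k + (Lᵀ * Matrix.diagonal ξ) i k) = 0 := by
    intro i
    have h1 : (L *ᵥ fun _ => (1:ℝ)) i = 0 := by rw [hL1]; rfl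
    have h2 : (ξ ᵥ* L) i = 0 := by rw [hξL]; rfl
    simp only [mulVec, dotProduct, mul_one] at h1
    simp only [vecMul, dotProduct] at h2
    simp only [Matrix.mul_apply, Matrix.diagonal_apply, Matrix.transpose_apply,
      Finset.sum_add_distrib, ite_mul, mul_ite, zero_mul, mul_zero,
      Finset.sum_ite_eq, Finset.sum_ite_eq', Finset.mem_univ, if_true]
    rw [← Finset.mul_sum, h1]
    simpa [mul_comm] using h2
  have key : ∀ ζ : Fin m → ℝ, x ζ ⬝ᵥ (S *ᵥ x ζ) =
      κ * β * (1 + ϱ ^ 2) * (ζ ⬝ᵥ ((∑ i, H i) *ᵥ ζ)) := by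
    intro ζ
    rw [hx, hS, hHd]
    simp only [dotProduct, mulVec, Fintype.sum_prod_type, Matrix.add_apply, kroneckerMap_apply,
      Matrix.of_apply, Matrix.one_apply, Fin.sum_univ_two, Matrix.cons_val_zero, Matrix.cons_val_one,
      Matrix.head_cons, Pi.zero_apply, mul_zero, zero_mul, add_zero, Finset.sum_const_zero,
      mul_ite, ite_mul, mul_one, Finset.sum_ite_eq, Finset.mem_univ, if_true]
    have step : ∀ (i : Fin n) (j : Fin m), (∑ k : Fin n, ∑ l : Fin m,
          ((if j = l then P 0 0 * ((Matrix.diagonal ξ * L) i k + (Lᵀ * Matrix.diagonal ξ) i k) else 0) +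
            if i = k then Q 0 0 * H i j l else 0) * ζ l)
        = Q 0 0 * ∑ l, H i j l * ζ l := by
      intro i j
      simp only [add_mul, ite_mul, zero_mul, Finset.sum_add_distrib,
        Finset.sum_ite_irrel, Finset.sum_const_zero, Finset.sum_ite_eq,
        Finset.mem_univ, if_true]
      rw [← Finset.sum_mul, ← Finset.mul_sum, hrow, mul_zero, zero_mul, zero_add, Finset.mul_sum]
      simp [mul_assoc]
    calc ∑ i : Fin n, ∑ j : Fin m, ζ j * (∑ k : Fin n, ∑ l : Fin m,
          ((if j = l then P 0 0 * ((Matrix.diagonal ξ * L) i k + (Lᵀ * Matrix.diagonal ξ) i k) else 0) +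
            if i = k then Q 0 0 * H i j l else 0) * ζ l)
        = ∑ i : Fin n, ∑ j : Fin m, ζ j * (Q 0 0 * ∑ l, H i j l * ζ l) := by
          exact Finset.sum_congr rfl fun i _ => Finset.sum_congr rfl fun j _ => by rw [step]
      _ = Q 0 0 * ∑ j : Fin m, ζ j * ∑ l : Fin m, (∑ i : Fin n, H i) j l * ζ l := by
          rw [Finset.sum_comm, Finset.mul_sum]
          refine Finset.sum_congr rfl fun j _ => ?_
          simp only [Matrix.sum_apply, Finset.sum_mul, Finset.mul_sum]
          rw [Finset.sum_comm]
          exact Finset.sum_congr rfl fun i _ => Finset.sum_congr rfl fun l _ => by ring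
      _ = κ * β * (1 + ϱ ^ 2) * ∑ j : Fin m, ζ j * ∑ l : Fin m, (∑ i : Fin n, H i) j l * ζ l := by
          rw [hQ]
          simp [Matrix.smul_apply]
  refine ⟨key, ?_⟩
  obtain ⟨c, hc, hcl⟩ := posdef_lower' hHsum
  have hK : (0:ℝ) < κ * β * (1 + ϱ ^ 2) := by positivity
  have hnR : (0:ℝ) < (n:ℝ) := by exact_mod_cast hn
  refine ⟨κ * β * (1 + ϱ ^ 2) * c / n, by positivity, fun ζ => ?_⟩
  have hxx : x ζ ⬝ᵥ x ζ = (n:ℝ) * (ζ ⬝ᵥ ζ) := by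
    rw [hx]
    simp only [dotProduct, Fintype.sum_prod_type, Fin.sum_univ_two, Matrix.cons_val_zero,
      Matrix.cons_val_one, Matrix.head_cons, Pi.zero_apply, mul_zero, zero_mul,
      Finset.sum_const_zero, add_zero]
    rw [Finset.sum_const, nsmul_eq_mul]
    simp
  rw [key ζ, hxx]
  have h := hcl ζ
  have hrw : -(κ * β * (1 + ϱ ^ 2) * c / ↑n) * ((n:ℝ) * (ζ ⬝ᵥ ζ)) =
      -(κ * β * (1 + ϱ ^ 2) * (c * (ζ ⬝ᵥ ζ))) := by
    field_simp
  rw [hrw]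
  have := mul_le_mul_of_nonneg_left h hK.le
  linarith
end

section
/- Let α, κ, β > 0 and λ_L > 0, λ_H ≥ 0 be constants. For ϱ > 0 define the symmetric 2×2 matrices P(ϱ) = (α/2)[[ϱ³+2ϱ+(α+1)/(αϱ), 1+ϱ²],[1+ϱ², ϱ]] and Q(ϱ) = κβ [[1+ϱ², ϱ/2],[ϱ/2, 0]], and let λ_P(ϱ) be the smallest eigenvalue of P(ϱ) and λ_Q(ϱ) the largest eigenvalue of −Q(ϱ). Then there exists ϱ₀ > 0 such that for all ϱ ∈ (0, ϱ₀), λ_P(ϱ)·λ_L − λ_Q(ϱ)·λ_H > 0. -/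
open Matrix

lemma eig_ge {n : Type*} [Fintype n] [DecidableEq n] {A : Matrix n n ℝ}
    (hA : A.IsHermitian) (c : ℝ) (h : (A - c • 1).PosSemidef) (i : n) :
    c ≤ hA.eigenvalues i := by
  set v : n → ℝ := ⇑(hA.eigenvectorBasis i) with hv
  have hvne : v ≠ 0 := by
    rw [hv]; exact (WithLp.ofLp_eq_zero 2).not.mpr (hA.eigenvectorBasis.orthonormal.ne_zero i)
  have hm : A *ᵥ v = hA.eigenvalues i • v := hA.mulVec_eigenvectorBasis i
  have h2 := h.dotProduct_mulVec_nonneg v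
  have hcalc : dotProduct (star v) ((A - c • 1) *ᵥ v)
      = (hA.eigenvalues i - c) * dotProduct v v := by
    simp [sub_mulVec, hm, smul_mulVec, dotProduct_sub, dotProduct_smul,
      star_trivial, sub_mul, smul_eq_mul]
  rw [hcalc] at h2
  have hpos : 0 < dotProduct v v := by
    have hnn : (0:ℝ) ≤ dotProduct v v :=
      Finset.sum_nonneg (fun j _ => mul_self_nonneg (v j))
    rcases lt_or_eq_of_le hnn with h' | h'
    · exact h'
    · exact absurd (dotProduct_self_eq_zero.mp h'.symm) hvne
  nlinarith [h2, hpos]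

lemma eig_le {n : Type*} [Fintype n] [DecidableEq n] {A : Matrix n n ℝ}
    (hA : A.IsHermitian) (c : ℝ) (h : (c • 1 - A).PosSemidef) (i : n) :
    hA.eigenvalues i ≤ c := by
  set v : n → ℝ := ⇑(hA.eigenvectorBasis i) with hv
  have hvne : v ≠ 0 := by
    rw [hv]; exact (WithLp.ofLp_eq_zero 2).not.mpr (hA.eigenvectorBasis.orthonormal.ne_zero i)
  have hm : A *ᵥ v = hA.eigenvalues i • v := hA.mulVec_eigenvectorBasis i
  have h2 := h.dotProduct_mulVec_nonneg v
  have hcalc : dotProduct (star v) ((c • 1 - A) *ᵥ v)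
      = (c - hA.eigenvalues i) * dotProduct v v := by
    simp [sub_mulVec, hm, smul_mulVec, dotProduct_sub, dotProduct_smul,
      star_trivial, sub_mul, smul_eq_mul]
  rw [hcalc] at h2
  have hpos : 0 < dotProduct v v := by
    have hnn : (0:ℝ) ≤ dotProduct v v :=
      Finset.sum_nonneg (fun j _ => mul_self_nonneg (v j))
    rcases lt_or_eq_of_le hnn with h' | h'
    · exact h'
    · exact absurd (dotProduct_self_eq_zero.mp h'.symm) hvne
  nlinarith [h2, hpos]

lemma psd2 (M : Matrix (Fin 2) (Fin 2) ℝ) (hsym : M 0 1 = M 1 0)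
    (h00 : 0 ≤ M 0 0) (h11 : 0 ≤ M 1 1) (hdet : M 0 1 ^ 2 ≤ M 0 0 * M 1 1) :
    M.PosSemidef := by
  refine Matrix.PosSemidef.of_dotProduct_mulVec_nonneg ?_ ?_
  · ext i j
    fin_cases i <;> fin_cases j <;>
      simp [Matrix.conjTranspose_apply, hsym]
  · intro x
    have hq : dotProduct (star x) (M *ᵥ x)
        = M 0 0 * (x 0)^2 + 2 * (M 0 1) * (x 0 * x 1) + M 1 1 * (x 1)^2 := by
      simp [dotProduct, mulVec, Fin.sum_univ_two, hsym]
      ring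
    rw [hq]
    rcases eq_or_lt_of_le h00 with ha | ha
    · have hb : M 0 1 = 0 := by nlinarith [sq_nonneg (M 0 1)]
      rw [hb, ← ha]
      nlinarith [mul_nonneg h11 (sq_nonneg (x 1))]
    · nlinarith [sq_nonneg (M 0 0 * x 0 + M 0 1 * x 1),
        mul_nonneg (sub_nonneg.2 hdet) (sq_nonneg (x 1)), ha]


lemma Pbound (α ϱ : ℝ) (hα : 0 < α) (hϱ0 : 0 < ϱ) (hϱhalf : ϱ < 1/2) :
    (!![α/2*(ϱ^3+2*ϱ+(α+1)/(α*ϱ)) - α*ϱ/(4*(α+1)), α/2*(1+ϱ^2);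
        α/2*(1+ϱ^2), α/2*ϱ - α*ϱ/(4*(α+1))] : Matrix (Fin 2) (Fin 2) ℝ).PosSemidef := by
  have hα1 : 0 < α + 1 := by linarith
  have hαϱ : (0:ℝ) < α * ϱ := by positivity
  obtain ⟨w, hw⟩ : ∃ w : ℝ, w = (α + 1) / (α * ϱ) := ⟨_, rfl⟩
  obtain ⟨cP, hcP⟩ : ∃ c : ℝ, c = α * ϱ / (4 * (α + 1)) := ⟨_, rfl⟩
  rw [← hw, ← hcP]
  have hcPpos : 0 < cP := by rw [hcP]; positivity
  have hwpos : 0 < w := by rw [hw]; positivity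
  have hcPle : cP ≤ ϱ / 4 := by
    rw [hcP, div_le_div_iff₀ (by positivity) (by norm_num)]
    nlinarith only [hα, hϱ0, hαϱ]
  have hcPle2 : cP ≤ α * ϱ / 4 := by
    rw [hcP, div_le_div_iff₀ (by positivity) (by norm_num)]
    nlinarith only [mul_pos hα hαϱ]
  have hcPw : cP * w = 1 / 4 := by
    rw [hcP, hw]
    field_simp
  have key : α * (w * ϱ) = α + 1 := by
    rw [hw]; field_simp
  have hsq : ϱ ^ 2 < 1/4 := by nlinarith only [hϱ0, hϱhalf]
  have h3 : cP * (ϱ ^ 3 + 3 * ϱ) < 1/4 := by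
    have h1 : cP * (ϱ ^ 3 + 3 * ϱ) ≤ (ϱ/4) * (ϱ ^ 3 + 3 * ϱ) :=
      mul_le_mul_of_nonneg_right hcPle (by positivity)
    have hq4 : ϱ ^ 4 < 1/16 := by nlinarith only [sq_nonneg (ϱ ^ 2), hsq, sq_nonneg ϱ]
    nlinarith only [h1, hq4, hsq, hϱ0]
  apply psd2
  · simp
  · simp only [Matrix.cons_val', Matrix.cons_val_zero, Matrix.empty_val',
      Matrix.cons_val_fin_one, Matrix.of_apply]
    nlinarith only [hcPle2, mul_pos hα hϱ0, mul_pos hα hwpos,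
      mul_nonneg hα.le (by positivity : (0:ℝ) ≤ ϱ ^ 3)]
  · simp only [Matrix.cons_val', Matrix.cons_val_zero, Matrix.empty_val',
      Matrix.cons_val_fin_one, Matrix.cons_val_one, Matrix.head_cons,
      Matrix.head_fin_const, Matrix.of_apply]
    nlinarith only [hcPle2, mul_pos hα hϱ0]
  · simp only [Matrix.cons_val', Matrix.cons_val_zero, Matrix.empty_val',
      Matrix.cons_val_fin_one, Matrix.cons_val_one, Matrix.head_cons,
      Matrix.head_fin_const, Matrix.of_apply]
    have expand : (α/2*(ϱ^3+2*ϱ+w) - cP) * (α/2*ϱ - cP) - (α/2*(1+ϱ^2))^2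
        = α/8 - (α/2)*(cP*(ϱ^3+3*ϱ)) + cP^2 := by
      linear_combination (α/4) * key - (α/2) * hcPw
    nlinarith only [expand, sq_nonneg cP,
      mul_pos hα (by linarith only [h3] : (0:ℝ) < 1/4 - cP * (ϱ^3+3*ϱ))]

lemma Qbound (κ β ϱ : ℝ) (hκ : 0 < κ) (hβ : 0 < β) (hϱ0 : 0 < ϱ) :
    (!![κ*β*(1+ϱ^2) + κ*β*ϱ^2, κ*β*(ϱ/2);
        κ*β*(ϱ/2), κ*β*ϱ^2] : Matrix (Fin 2) (Fin 2) ℝ).PosSemidef := by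
  apply psd2
  · simp
  · simp only [Matrix.cons_val', Matrix.cons_val_zero, Matrix.empty_val',
      Matrix.cons_val_fin_one, Matrix.of_apply]
    positivity
  · simp only [Matrix.cons_val', Matrix.cons_val_zero, Matrix.empty_val',
      Matrix.cons_val_fin_one, Matrix.cons_val_one, Matrix.head_cons,
      Matrix.head_fin_const, Matrix.of_apply]
    positivity
  · simp only [Matrix.cons_val', Matrix.cons_val_zero, Matrix.empty_val',
      Matrix.cons_val_fin_one, Matrix.cons_val_one, Matrix.head_cons,
      Matrix.head_fin_const, Matrix.of_apply]
    nlinarith only [sq_nonneg (κ*β*ϱ), sq_nonneg (κ*β*ϱ^2), mul_pos hκ hβ, sq_nonneg ϱ]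

/-- Let λ_P(ϱ) be the smallest eigenvalue of
P(ϱ) = (α/2)[[ϱ³+2ϱ+(α+1)/(αϱ), 1+ϱ²],[1+ϱ², ϱ]] and λ_Q(ϱ) the largest
eigenvalue of −Q(ϱ) with Q(ϱ) = κβ[[1+ϱ², ϱ/2],[ϱ/2, 0]]. Then for any
constants λ_L > 0 and λ_H ≥ 0 there exists ϱ₀ > 0 such that
λ_P(ϱ)·λ_L − λ_Q(ϱ)·λ_H > 0 for all ϱ ∈ (0, ϱ₀). -/
theorem stmt14 (α κ β lamL lamH : ℝ)
    (hα : 0 < α) (hκ : 0 < κ) (hβ : 0 < β) (hL : 0 < lamL) (hHnn : 0 ≤ lamH)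
    (P Q : ℝ → Matrix (Fin 2) (Fin 2) ℝ)
    (hP : ∀ ϱ, P ϱ =
      (α / 2) • !![ϱ ^ 3 + 2 * ϱ + (α + 1) / (α * ϱ), 1 + ϱ ^ 2; 1 + ϱ ^ 2, ϱ])
    (hQ : ∀ ϱ, Q ϱ = (κ * β) • !![1 + ϱ ^ 2, ϱ / 2; ϱ / 2, 0])
    (hPh : ∀ ϱ, (P ϱ).IsHermitian) (hQh : ∀ ϱ, (-(Q ϱ)).IsHermitian) :
    ∃ ϱ₀ > (0 : ℝ), ∀ ϱ ∈ Set.Ioo (0 : ℝ) ϱ₀,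
      0 < (⨅ i, (hPh ϱ).eigenvalues i) * lamL - (⨆ i, (hQh ϱ).eigenvalues i) * lamH := by
  have hα1 : 0 < α + 1 := by linarith
  have hden : 0 < 4 * (α + 1) * (κ * β * (lamH + 1)) := by positivity
  refine ⟨min (1/2) (α * lamL / (4 * (α + 1) * (κ * β * (lamH + 1)))), ?_, ?_⟩
  · exact lt_min (by norm_num) (by positivity)
  intro ϱ hϱ
  obtain ⟨hϱ0, hϱub⟩ := hϱ
  have hϱhalf : ϱ < 1/2 := lt_of_lt_of_le hϱub (min_le_left _ _)
  have hϱsmall : ϱ < α * lamL / (4 * (α + 1) * (κ * β * (lamH + 1))) :=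
    lt_of_lt_of_le hϱub (min_le_right _ _)
  obtain ⟨cP, hcP⟩ : ∃ c : ℝ, c = α * ϱ / (4 * (α + 1)) := ⟨_, rfl⟩
  obtain ⟨cQ, hcQ⟩ : ∃ c : ℝ, c = κ * β * ϱ ^ 2 := ⟨_, rfl⟩
  have hPM : P ϱ - cP • (1 : Matrix (Fin 2) (Fin 2) ℝ) =
      !![α/2*(ϱ^3+2*ϱ+(α+1)/(α*ϱ)) - α*ϱ/(4*(α+1)), α/2*(1+ϱ^2);
         α/2*(1+ϱ^2), α/2*ϱ - α*ϱ/(4*(α+1))] := by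
    rw [hP, hcP]
    ext i j
    fin_cases i <;> fin_cases j <;>
      simp [Matrix.sub_apply, Matrix.smul_apply, Matrix.one_apply] <;> ring
  have hQM : cQ • (1 : Matrix (Fin 2) (Fin 2) ℝ) - -(Q ϱ) =
      !![κ*β*(1+ϱ^2) + κ*β*ϱ^2, κ*β*(ϱ/2); κ*β*(ϱ/2), κ*β*ϱ^2] := by
    rw [hQ, hcQ]
    ext i j
    fin_cases i <;> fin_cases j <;>
      simp [Matrix.sub_apply, Matrix.smul_apply, Matrix.one_apply, Matrix.neg_apply] <;> ring
  have hPlow : ∀ i, cP ≤ (hPh ϱ).eigenvalues i := by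
    apply eig_ge
    rw [hPM]
    exact Pbound α ϱ hα hϱ0 hϱhalf
  have hQup : ∀ i, (hQh ϱ).eigenvalues i ≤ cQ := by
    apply eig_le
    rw [hQM]
    exact Qbound κ β ϱ hκ hβ hϱ0
  have hinf : cP ≤ ⨅ i, (hPh ϱ).eigenvalues i := le_ciInf hPlow
  have hsup : (⨆ i, (hQh ϱ).eigenvalues i) ≤ cQ := ciSup_le hQup
  have h4 : ϱ * (4 * (α + 1) * (κ * β * (lamH + 1))) < α * lamL :=
    (lt_div_iff₀ hden).1 hϱsmall
  have h7 : cQ * lamH < cP * lamL := by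
    rw [hcQ, hcP, div_mul_eq_mul_div, lt_div_iff₀ (by positivity : (0:ℝ) < 4*(α+1))]
    nlinarith only [hHnn, mul_lt_mul_of_pos_left h4 hϱ0,
      mul_pos (mul_pos (mul_pos hκ hβ) (mul_pos hϱ0 hϱ0)) (by positivity : (0:ℝ) < 4*(α+1))]
  have h5 : cP * lamL ≤ (⨅ i, (hPh ϱ).eigenvalues i) * lamL :=
    mul_le_mul_of_nonneg_right hinf hL.le
  have h6 : (⨆ i, (hQh ϱ).eigenvalues i) * lamH ≤ cQ * lamH :=
    mul_le_mul_of_nonneg_right hsup hHnn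
  linarith
end
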